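/- The function φ(δ_x, δ_z) = h((1 - √(δ_x² + δ_z²))/2) + 1 - h((1 - δ_z)/2), defined for δ_x, δ_z ≥ 0 with δ_x² + δ_z² ≤ 1, is non-increasing in δ_x for fixed δ_z, and satisfies φ(δ_x, δ_z) ≤ φ(δ_x, 0) = h((1 - δ_x)/2). -/

import Mathlib

/-- Binary entropy with base-2 logarithm. -/
noncomputable def binEnt (y : ℝ) : ℝ :=
  -y * Real.logb 2 y - (1 - y) * Real.logb 2 (1 - y)

/-- `φ(δx, δz) = h((1 - √(δx² + δz²))/2) + 1 - h((1 - δz)/2)`. -/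
noncomputable def phiEnt (δx δz : ℝ) : ℝ :=
  binEnt ((1 - Real.sqrt (δx ^ 2 + δz ^ 2)) / 2) + 1 - binEnt ((1 - δz) / 2)

open Real Set

lemma binEnt_eq (y : ℝ) : binEnt y = Real.binEntropy y / Real.log 2 := by
  simp only [binEnt, Real.binEntropy, Real.logb, Real.log_inv]
  ring

/-- auxiliary function u(s) = 2s/(1-s²) - log(1+s) + log(1-s) -/
noncomputable def auxU (s : ℝ) : ℝ :=
  2 * s / (1 - s ^ 2) - Real.log (1 + s) + Real.log (1 - s)

lemma auxU_hasDeriv {s : ℝ} (hs0 : 0 ≤ s) (hs1 : s < 1) :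
    HasDerivAt auxU ((2 * (1 - s ^ 2) - 2 * s * (-(2 * s))) / (1 - s ^ 2) ^ 2
      - 1 / (1 + s) + (-1) / (1 - s)) s := by
  have h1 : (1 : ℝ) - s ^ 2 ≠ 0 := by nlinarith
  have h2 : (1 : ℝ) + s ≠ 0 := by nlinarith
  have h3 : (1 : ℝ) - s ≠ 0 := by nlinarith
  have hd1 : HasDerivAt (fun s : ℝ => 2 * s / (1 - s ^ 2))
      ((2 * (1 - s ^ 2) - 2 * s * (-(2 * s))) / (1 - s ^ 2) ^ 2) s := by
    have hnum : HasDerivAt (fun s : ℝ => 2 * s) 2 s := by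
      simpa using (hasDerivAt_id s).const_mul 2
    have hden : HasDerivAt (fun s : ℝ => 1 - s ^ 2) (-(2 * s)) s := by
      have := (hasDerivAt_pow 2 s).const_sub 1
      simpa using this
    exact hnum.div hden h1
  have hd2 : HasDerivAt (fun s : ℝ => Real.log (1 + s)) (1 / (1 + s)) s := by
    have h : HasDerivAt (fun s : ℝ => 1 + s) 1 s := by
      simpa using (hasDerivAt_id s).const_add 1
    simpa using h.log h2
  have hd3 : HasDerivAt (fun s : ℝ => Real.log (1 - s)) ((-1) / (1 - s)) s := by
    have h : HasDerivAt (fun s : ℝ => 1 - s) (-1) s := by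
      simpa using (hasDerivAt_id s).const_sub 1
    simpa using h.log h3
  exact (hd1.sub hd2).add hd3

lemma auxU_nonneg {s : ℝ} (hs0 : 0 ≤ s) (hs1 : s < 1) : 0 ≤ auxU s := by
  have hmono : MonotoneOn auxU (Set.Ico (0 : ℝ) 1) := by
    apply monotoneOn_of_deriv_nonneg (convex_Ico 0 1)
    · intro x hx
      exact (auxU_hasDeriv hx.1 hx.2).continuousAt.continuousWithinAt
    · intro x hx
      rw [interior_Ico] at hx
      exact (auxU_hasDeriv hx.1.le hx.2).differentiableAt.differentiableWithinAt
    · intro x hx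
      rw [interior_Ico] at hx
      rw [(auxU_hasDeriv hx.1.le hx.2).deriv]
      have h1 : (0 : ℝ) < 1 - x ^ 2 := by nlinarith [hx.1, hx.2]
      have h2 : (0 : ℝ) < 1 + x := by nlinarith [hx.1]
      have h3 : (0 : ℝ) < 1 - x := by nlinarith [hx.2]
      have key : (2 * (1 - x ^ 2) - 2 * x * (-(2 * x))) / (1 - x ^ 2) ^ 2
          - 1 / (1 + x) + (-1) / (1 - x) = 4 * x ^ 2 / (1 - x ^ 2) ^ 2 := by
        field_simp
        ring
      rw [key]
      positivity
  have h0 : auxU 0 = 0 := by simp [auxU]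
  have := hmono (Set.mem_Ico.mpr ⟨le_refl 0, one_pos⟩) (Set.mem_Ico.mpr ⟨hs0, hs1⟩) hs0
  linarith [this]

/-- ψ(s) = (log(1+s) - log(1-s))/s -/
noncomputable def auxPsi (s : ℝ) : ℝ := (Real.log (1 + s) - Real.log (1 - s)) / s

lemma auxPsi_hasDeriv {s : ℝ} (hs0 : 0 < s) (hs1 : s < 1) :
    HasDerivAt auxPsi (((1 / (1 + s) - (-1) / (1 - s)) * s
      - (Real.log (1 + s) - Real.log (1 - s)) * 1) / s ^ 2) s := by
  have h2 : (1 : ℝ) + s ≠ 0 := by nlinarith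
  have h3 : (1 : ℝ) - s ≠ 0 := by nlinarith
  have hd2 : HasDerivAt (fun s : ℝ => Real.log (1 + s)) (1 / (1 + s)) s := by
    have h : HasDerivAt (fun s : ℝ => 1 + s) 1 s := by
      simpa using (hasDerivAt_id s).const_add 1
    simpa using h.log h2
  have hd3 : HasDerivAt (fun s : ℝ => Real.log (1 - s)) ((-1) / (1 - s)) s := by
    have h : HasDerivAt (fun s : ℝ => 1 - s) (-1) s := by
      simpa using (hasDerivAt_id s).const_sub 1
    simpa using h.log h3
  exact (hd2.sub hd3).div (hasDerivAt_id s) hs0.ne'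

lemma auxPsi_mono : MonotoneOn auxPsi (Set.Ioo (0 : ℝ) 1) := by
  apply monotoneOn_of_deriv_nonneg (convex_Ioo 0 1)
  · intro x hx
    exact (auxPsi_hasDeriv hx.1 hx.2).continuousAt.continuousWithinAt
  · intro x hx
    rw [interior_Ioo] at hx
    exact (auxPsi_hasDeriv hx.1 hx.2).differentiableAt.differentiableWithinAt
  · intro x hx
    rw [interior_Ioo] at hx
    obtain ⟨hx0, hx1⟩ := hx
    rw [(auxPsi_hasDeriv hx0 hx1).deriv]
    have h1 : (0 : ℝ) < 1 - x ^ 2 := by nlinarith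
    have h2 : (0 : ℝ) < 1 + x := by nlinarith
    have h3 : (0 : ℝ) < 1 - x := by nlinarith
    have hu : 0 ≤ auxU x := auxU_nonneg hx0.le hx1
    have hnum : 0 ≤ (1 / (1 + x) - (-1) / (1 - x)) * x
        - (Real.log (1 + x) - Real.log (1 - x)) * 1 := by
      have heq : (1 / (1 + x) - (-1) / (1 - x)) * x = 2 * x / (1 - x ^ 2) := by
        field_simp
        ring
      rw [heq]
      have : auxU x = 2 * x / (1 - x ^ 2) - Real.log (1 + x) + Real.log (1 - x) := rfl
      linarith
    positivity

/-- g(t) = binEntropy((1-√t)/2) -/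
noncomputable def auxG (t : ℝ) : ℝ := Real.binEntropy ((1 - Real.sqrt t) / 2)

lemma auxG_hasDeriv {t : ℝ} (ht0 : 0 < t) (ht1 : t < 1) :
    HasDerivAt auxG (-auxPsi (Real.sqrt t) / 4) t := by
  set s := Real.sqrt t with hs
  have hs0 : 0 < s := Real.sqrt_pos.mpr ht0
  have hsq : s ^ 2 = t := Real.sq_sqrt ht0.le
  have hs1 : s < 1 := by nlinarith
  have hp0 : (1 - s) / 2 ≠ 0 := by
    have : (0:ℝ) < (1 - s) / 2 := by nlinarith
    exact this.ne' 
  have hp1 : (1 - s) / 2 ≠ 1 := by nlinarith [Real.sqrt_nonneg t]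
  have hb : HasDerivAt Real.binEntropy
      (Real.log (1 - (1 - s) / 2) - Real.log ((1 - s) / 2)) ((1 - s) / 2) :=
    Real.hasDerivAt_binEntropy hp0 hp1
  have hsqrt : HasDerivAt (fun t : ℝ => (1 - Real.sqrt t) / 2) (-(1 / (2 * s)) / 2) t := by
    exact ((Real.hasDerivAt_sqrt ht0.ne').const_sub 1).div_const 2
  have hcomp := hb.comp t hsqrt
  convert hcomp using 1
  case e'_4 => rfl
  case e'_5 => rfl
  case e'_8 => rfl
  have h1 : (1 : ℝ) - (1 - s) / 2 = (1 + s) / 2 := by ring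
  have h2 : Real.log ((1 + s) / 2) = Real.log (1 + s) - Real.log 2 :=
    Real.log_div (by nlinarith) two_ne_zero
  have h3 : Real.log ((1 - s) / 2) = Real.log (1 - s) - Real.log 2 :=
    Real.log_div (by nlinarith) two_ne_zero
  rw [h1, h2, h3]
  unfold auxPsi
  field_simp
  try ring
  try exact Or.inl trivial

lemma auxG_continuous : Continuous auxG :=
  Real.binEntropy_continuous.comp (by fun_prop)

lemma auxG_zero : auxG 0 = Real.log 2 := by
  unfold auxG
  rw [Real.sqrt_zero, show ((1:ℝ) - 0) / 2 = 2⁻¹ by norm_num, Real.binEntropy_two_inv]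

/-- Key inequality: g(a+b) - g(b) ≤ g(a) - log 2 for a,b ≥ 0, a+b ≤ 1. -/
lemma auxG_key {a b : ℝ} (ha : 0 ≤ a) (hb : 0 ≤ b) (hab : a + b ≤ 1) :
    auxG (a + b) - auxG b ≤ auxG a - Real.log 2 := by
  set H : ℝ → ℝ := fun b => auxG (a + b) - auxG b with hH
  have hanti : AntitoneOn H (Set.Icc 0 (1 - a)) := by
    apply antitoneOn_of_deriv_nonpos (convex_Icc 0 (1 - a))
    · exact ((auxG_continuous.comp (by fun_prop)).sub auxG_continuous).continuousOn
    · intro x hx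
      rw [interior_Icc] at hx
      obtain ⟨hx0, hx1⟩ := hx
      have h1 : 0 < a + x := by linarith
      have h2 : a + x < 1 := by linarith
      have hd1 : HasDerivAt (fun b : ℝ => auxG (a + b))
          (-auxPsi (Real.sqrt (a + x)) / 4 * 1) x :=
        (auxG_hasDeriv h1 h2).comp x (by simpa using (hasDerivAt_id x).const_add a)
      have hd2 := auxG_hasDeriv hx0 (by linarith : x < 1)
      exact (hd1.sub hd2).differentiableAt.differentiableWithinAt
    · intro x hx
      rw [interior_Icc] at hx
      obtain ⟨hx0, hx1⟩ := hx
      have h1 : 0 < a + x := by linarith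
      have h2 : a + x < 1 := by linarith
      have hd1 : HasDerivAt (fun b : ℝ => auxG (a + b))
          (-auxPsi (Real.sqrt (a + x)) / 4 * 1) x :=
        (auxG_hasDeriv h1 h2).comp x (by simpa using (hasDerivAt_id x).const_add a)
      have hd2 := auxG_hasDeriv hx0 (by linarith : x < 1)
      rw [show H = (fun b => auxG (a + b)) - auxG from rfl, (hd1.sub hd2).deriv]
      have hm : auxPsi (Real.sqrt x) ≤ auxPsi (Real.sqrt (a + x)) := by
        have hx01 : Real.sqrt x ∈ Set.Ioo (0 : ℝ) 1 := by
          constructor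
          · exact Real.sqrt_pos.mpr hx0
          · have := Real.sq_sqrt hx0.le
            nlinarith [Real.sqrt_nonneg x]
        have hax01 : Real.sqrt (a + x) ∈ Set.Ioo (0 : ℝ) 1 := by
          constructor
          · exact Real.sqrt_pos.mpr h1
          · have := Real.sq_sqrt h1.le
            nlinarith [Real.sqrt_nonneg (a + x)]
        exact auxPsi_mono hx01 hax01 (Real.sqrt_le_sqrt (by linarith))
      linarith
  have h1 : (0 : ℝ) ∈ Set.Icc (0 : ℝ) (1 - a) := ⟨le_refl 0, by linarith⟩
  have h2 : b ∈ Set.Icc (0 : ℝ) (1 - a) := ⟨hb, by linarith⟩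
  have := hanti h1 h2 hb
  simp only [hH, add_zero] at this
  rw [auxG_zero] at this
  linarith

theorem stmt16 (δx δz : ℝ) (hδx : 0 ≤ δx) (hδz : 0 ≤ δz) (hδ : δx ^ 2 + δz ^ 2 ≤ 1) :
    (∀ δx' : ℝ, δx ≤ δx' → δx' ^ 2 + δz ^ 2 ≤ 1 → phiEnt δx' δz ≤ phiEnt δx δz) ∧
    phiEnt δx δz ≤ phiEnt δx 0 ∧
    phiEnt δx 0 = binEnt ((1 - δx) / 2) := by
  have hlog2 : (0 : ℝ) < Real.log 2 := Real.log_pos (by norm_num)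
  have hmem : ∀ c : ℝ, 0 ≤ c → c ≤ 1 →
      (1 - Real.sqrt c) / 2 ∈ Set.Icc (0 : ℝ) 2⁻¹ := by
    intro c hc0 hc1
    constructor
    · have : Real.sqrt c ≤ 1 := Real.sqrt_le_one.mpr hc1
      linarith
    · have : 0 ≤ Real.sqrt c := Real.sqrt_nonneg c
      linarith
  have hbe_half : binEnt ((1 - (0:ℝ)) / 2) = 1 := by
    rw [binEnt_eq, show ((1:ℝ) - 0) / 2 = 2⁻¹ by norm_num, Real.binEntropy_two_inv,
      div_self hlog2.ne']
  refine ⟨?_, ?_, ?_⟩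
  · -- monotone in δx
    intro δx' hle hδ'
    have hx'0 : 0 ≤ δx' := le_trans hδx hle
    unfold phiEnt
    have hsq : Real.sqrt (δx ^ 2 + δz ^ 2) ≤ Real.sqrt (δx' ^ 2 + δz ^ 2) :=
      Real.sqrt_le_sqrt (by nlinarith)
    have h1 := hmem _ (by positivity) hδ
    have h2 := hmem _ (by positivity) hδ'
    have hmono := Real.binEntropy_strictMonoOn.monotoneOn h2 h1 (by linarith)
    have hle2 : binEnt ((1 - Real.sqrt (δx' ^ 2 + δz ^ 2)) / 2) ≤
        binEnt ((1 - Real.sqrt (δx ^ 2 + δz ^ 2)) / 2) := by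
      rw [binEnt_eq, binEnt_eq]
      exact (div_le_div_iff_of_pos_right hlog2).mpr hmono
    linarith
  · -- φ(δx, δz) ≤ φ(δx, 0)
    unfold phiEnt
    have key := auxG_key (a := δx ^ 2) (b := δz ^ 2) (by positivity) (by positivity) hδ
    have hsx : Real.sqrt (δx ^ 2) = δx := Real.sqrt_sq hδx
    have hsz : Real.sqrt (δz ^ 2) = δz := Real.sqrt_sq hδz
    have e1 : binEnt ((1 - Real.sqrt (δx ^ 2 + δz ^ 2)) / 2) =
        auxG (δx ^ 2 + δz ^ 2) / Real.log 2 := by rw [binEnt_eq]; rfl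
    have e2 : binEnt ((1 - δz) / 2) = auxG (δz ^ 2) / Real.log 2 := by
      rw [binEnt_eq]
      unfold auxG
      rw [hsz]
    have e3 : binEnt ((1 - Real.sqrt (δx ^ 2 + 0 ^ 2)) / 2) =
        auxG (δx ^ 2) / Real.log 2 := by
      rw [binEnt_eq]
      unfold auxG
      norm_num
    rw [e1, e2, e3, hbe_half]
    have h1 : (auxG (δx ^ 2 + δz ^ 2) - auxG (δz ^ 2)) / Real.log 2 ≤
        (auxG (δx ^ 2) - Real.log 2) / Real.log 2 :=
      (div_le_div_iff_of_pos_right hlog2).mpr (by linarith)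
    have e4 : (auxG (δx ^ 2 + δz ^ 2) - auxG (δz ^ 2)) / Real.log 2 =
        auxG (δx ^ 2 + δz ^ 2) / Real.log 2 - auxG (δz ^ 2) / Real.log 2 := sub_div _ _ _
    have e5 : (auxG (δx ^ 2) - Real.log 2) / Real.log 2 =
        auxG (δx ^ 2) / Real.log 2 - 1 := by
      rw [sub_div, div_self hlog2.ne']
    rw [e4, e5] at h1
    linarith
  · -- φ(δx, 0) = h((1-δx)/2)
    unfold phiEnt
    rw [hbe_half]
    have hx : Real.sqrt (δx ^ 2 + 0 ^ 2) = δx := by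
      norm_num
      exact Real.sqrt_sq hδx
    rw [hx]
    ring
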